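/- The map π : ℂ³ → ℂ⁶ given by π(D,G,I) = (DI, GD, D², −IG, −G², I²) is surjective onto X̃': for every (b,c,d,f,g,i) ∈ ℂ⁶ satisfying fd + bc = 0, gd + c² = 0, di − b² = 0 and gi + f² = 0, there exist D, G, I ∈ ℂ with b = DI, c = GD, d = D², f = −IG, g = −G², i = I². -/
import Mathlib


theorem pi_surjective (b c d f g i : ℂ)
    (h1 : f * d + b * c = 0) (h2 : g * d + c ^ 2 = 0) (h3 : d * i - b ^ 2 = 0)
    (h4 : g * i + f ^ 2 = 0) :
    ∃ D G I : ℂ, b = D * I ∧ c = G * D ∧ d = D ^ 2 ∧ f = -(I * G) ∧ g = -G ^ 2 ∧ i = I ^ 2 := by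
  by_cases hd : d = 0
  · subst hd
    have hb : b = 0 := by
      have : b ^ 2 = 0 := by linear_combination -h3
      exact pow_eq_zero_iff (by norm_num) |>.mp this
    have hc : c = 0 := by
      have : c ^ 2 = 0 := by linear_combination h2
      exact pow_eq_zero_iff (by norm_num) |>.mp this
    by_cases hg : g = 0
    · have hf : f = 0 := by
        have : f ^ 2 = 0 := by rw [hg] at h4; linear_combination h4
        exact pow_eq_zero_iff (by norm_num) |>.mp this
      obtain ⟨I, hI⟩ := IsAlgClosed.exists_pow_nat_eq i (n := 2) (by norm_num)
      exact ⟨0, 0, I, by simp [hb, hc, hf, hg, hI.symm]⟩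
    · obtain ⟨G, hG⟩ := IsAlgClosed.exists_pow_nat_eq (-g) (n := 2) (by norm_num)
      have hgG : g = -G ^ 2 := by linear_combination hG
      subst hgG
      have hG0 : G ≠ 0 := by
        intro h; exact hg (by rw [h]; ring)
      refine ⟨0, G, -f / G, by simp [hb], by simp [hc], by ring, ?_, rfl, ?_⟩
      · field_simp
      · field_simp
        linear_combination -h4
  · obtain ⟨D, hD⟩ := IsAlgClosed.exists_pow_nat_eq d (n := 2) (by norm_num)
    subst hD
    have hD0 : D ≠ 0 := by
      intro h; exact hd (by rw [h]; ring)
    refine ⟨D, c / D, b / D, by field_simp, by field_simp, rfl, ?_, ?_, ?_⟩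
    · field_simp
      linear_combination h1
    · field_simp
      linear_combination h2
    · field_simp
      linear_combination h3
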